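/- Let σ be a real symmetric traceless n×n matrix (n ≥ 2). Then (trace(σ³))² ≤ ((n-2)²/(n(n-1))) · (trace(σ²))³. -/

import Mathlib

open Finset in
lemma sum_cube_le (n : ℕ) (hn : 2 ≤ n) (f : Fin n → ℝ) (h0 : ∑ i, f i = 0) :
    ∑ i, f i ^ 3 ≤ ((n : ℝ) - 2) * Real.sqrt ((∑ i, f i ^ 2) / ((n : ℝ) * ((n : ℝ) - 1)))
      * (∑ i, f i ^ 2) := by
  set S : ℝ := ∑ i, f i ^ 2 with hS
  have hS0 : 0 ≤ S := Finset.sum_nonneg fun i _ => sq_nonneg _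
  have hnR : (2:ℝ) ≤ (n:ℝ) := by exact_mod_cast hn
  have hden : (0:ℝ) < (n : ℝ) * ((n : ℝ) - 1) := by nlinarith
  set c : ℝ := Real.sqrt (S / ((n : ℝ) * ((n : ℝ) - 1))) with hc
  have hc0 : 0 ≤ c := Real.sqrt_nonneg _
  have hc2 : c ^ 2 = S / ((n : ℝ) * ((n : ℝ) - 1)) := Real.sq_sqrt (by positivity)
  have hbound : ∀ i, f i ≤ ((n : ℝ) - 1) * c := by
    intro i
    have h1 : (∑ j ∈ univ.erase i, f j) = - f i := by
      have h := Finset.add_sum_erase univ f (Finset.mem_univ i)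
      rw [h0] at h; linarith
    have h2 : (∑ j ∈ univ.erase i, f j) ^ 2 ≤
        (univ.erase i).card * ∑ j ∈ univ.erase i, f j ^ 2 :=
      sq_sum_le_card_mul_sum_sq
    have hcard : (((univ.erase i).card : ℕ) : ℝ) = (n : ℝ) - 1 := by
      rw [Finset.card_erase_of_mem (Finset.mem_univ i)]
      have h1n : 1 ≤ n := by omega
      simp [Finset.card_univ, Nat.cast_sub h1n]
    have h3 : (∑ j ∈ univ.erase i, f j ^ 2) = S - f i ^ 2 := by
      have h := Finset.add_sum_erase univ (fun j => f j ^ 2) (Finset.mem_univ i)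
      rw [← hS] at h; linarith
    rw [h1, hcard, h3, neg_sq] at h2
    have h4 : f i ^ 2 ≤ (((n:ℝ) - 1) * c) ^ 2 := by
      have hn0 : (0:ℝ) < n := by linarith
      have : ((n:ℝ)-1)^2 * c ^ 2 = ((n:ℝ)-1) * S / n := by
        rw [hc2]; field_simp
      rw [mul_pow, this, le_div_iff₀ hn0]
      nlinarith
    have hM0 : 0 ≤ ((n:ℝ) - 1) * c :=
      mul_nonneg (by linarith) hc0
    calc f i ≤ |f i| := le_abs_self _
      _ = Real.sqrt ((f i)^2) := (Real.sqrt_sq_eq_abs _).symm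
      _ ≤ Real.sqrt ((((n:ℝ)-1)*c)^2) := Real.sqrt_le_sqrt h4
      _ = ((n:ℝ)-1)*c := Real.sqrt_sq hM0
  have key : ∀ i, f i ^ 3 ≤ ((n:ℝ)-3)*c*(f i)^2 + (2*(n:ℝ)-3)*c^2*(f i) + ((n:ℝ)-1)*c^3 := by
    intro i
    nlinarith [mul_nonneg (sub_nonneg.2 (hbound i)) (sq_nonneg (f i + c))]
  have hsum : ∑ i, f i ^ 3 ≤ ((n:ℝ)-3)*c*S + (2*(n:ℝ)-3)*c^2*0 + (n:ℝ)*(((n:ℝ)-1)*c^3) := by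
    calc ∑ i, f i ^ 3
        ≤ ∑ i, (((n:ℝ)-3)*c*(f i)^2 + (2*(n:ℝ)-3)*c^2*(f i) + ((n:ℝ)-1)*c^3) :=
          Finset.sum_le_sum fun i _ => key i
      _ = ((n:ℝ)-3)*c*S + (2*(n:ℝ)-3)*c^2*(∑ i, f i) + (n:ℝ)*(((n:ℝ)-1)*c^3) := by
          rw [Finset.sum_add_distrib, Finset.sum_add_distrib, ← Finset.mul_sum, ← Finset.mul_sum,
            Finset.sum_const, Finset.card_univ]
          simp [hS]
      _ = _ := by rw [h0]
  have hkey : (n:ℝ)*((n:ℝ)-1)*c^2 = S := by rw [hc2]; field_simp; exact mul_div_cancel_left₀ S (show (n:ℝ)-1 ≠ 0 by linarith)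
  calc ∑ i, f i ^ 3 ≤ ((n:ℝ)-3)*c*S + (2*(n:ℝ)-3)*c^2*0 + (n:ℝ)*(((n:ℝ)-1)*c^3) := hsum
    _ = ((n:ℝ)-3)*c*S + c * ((n:ℝ)*((n:ℝ)-1)*c^2) := by ring
    _ = ((n:ℝ)-2)*c*S := by rw [hkey]; ring

lemma sum_cube_sq_le (n : ℕ) (hn : 2 ≤ n) (f : Fin n → ℝ) (h0 : ∑ i, f i = 0) :
    (∑ i, f i ^ 3) ^ 2 ≤
      ((n : ℝ) - 2) ^ 2 / ((n : ℝ) * ((n : ℝ) - 1)) * (∑ i, f i ^ 2) ^ 3 := by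
  have hnR : (2:ℝ) ≤ (n:ℝ) := by exact_mod_cast hn
  have hden : (0:ℝ) < (n : ℝ) * ((n : ℝ) - 1) := by nlinarith
  set S : ℝ := ∑ i, f i ^ 2 with hS
  have hS0 : 0 ≤ S := Finset.sum_nonneg fun i _ => sq_nonneg _
  set c : ℝ := Real.sqrt (S / ((n : ℝ) * ((n : ℝ) - 1))) with hc
  have hc0 : 0 ≤ c := Real.sqrt_nonneg _
  have hc2 : c ^ 2 = S / ((n : ℝ) * ((n : ℝ) - 1)) := Real.sq_sqrt (by positivity)
  have h1 : ∑ i, f i ^ 3 ≤ ((n:ℝ)-2) * c * S := sum_cube_le n hn f h0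
  have h2 : -(∑ i, f i ^ 3) ≤ ((n:ℝ)-2) * c * S := by
    have h0' : ∑ i, (-f) i = 0 := by
      simp [Pi.neg_apply, Finset.sum_neg_distrib, h0]
    have h := sum_cube_le n hn (-f) h0'
    have e3 : ∑ i, (-f) i ^3 = -(∑ i, f i^3) := by
      simp [Pi.neg_apply, Odd.neg_pow (by decide : Odd 3), Finset.sum_neg_distrib]
    have e2 : ∑ i, (-f) i ^2 = S := by simp [Pi.neg_apply, neg_sq, hS]
    rw [e3, e2] at h
    exact h
  have habs : |∑ i, f i ^ 3| ≤ ((n:ℝ)-2) * c * S := abs_le.2 ⟨by linarith, h1⟩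
  calc (∑ i, f i ^ 3) ^ 2 = |∑ i, f i ^ 3| ^ 2 := (sq_abs _).symm
    _ ≤ (((n:ℝ)-2) * c * S) ^ 2 :=
        pow_le_pow_left₀ (abs_nonneg _) habs 2
    _ = ((n:ℝ)-2)^2 * c^2 * S^2 := by ring
    _ = ((n : ℝ) - 2) ^ 2 / ((n : ℝ) * ((n : ℝ) - 1)) * S ^ 3 := by
        rw [hc2]; field_simp

theorem trace_cube_sq_le_of_traceless (n : ℕ) (hn : 2 ≤ n)
    (σ : Matrix (Fin n) (Fin n) ℝ) (hσ : σ.IsSymm) (htr : σ.trace = 0) :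
    ((σ * σ * σ).trace) ^ 2 ≤
      ((n : ℝ) - 2) ^ 2 / ((n : ℝ) * ((n : ℝ) - 1)) * ((σ * σ).trace) ^ 3 := by
  have hH : σ.IsHermitian := by
    rw [Matrix.IsHermitian, Matrix.conjTranspose]
    simp [Matrix.IsSymm] at hσ ⊢
    exact hσ
  set U : Matrix (Fin n) (Fin n) ℝ := (hH.eigenvectorUnitary : Matrix (Fin n) (Fin n) ℝ) with hU
  set d : Fin n → ℝ := hH.eigenvalues with hdd
  have hspec : σ = U * Matrix.diagonal d * star U := by
    have := hH.spectral_theorem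
    simpa [RCLike.ofReal, Function.comp] using this
  have hUU : (star U) * U = 1 := Unitary.coe_star_mul_self hH.eigenvectorUnitary
  have h1 : σ.trace = ∑ i, d i := by
    rw [hspec, Matrix.trace_mul_cycle, hUU, Matrix.one_mul,
      Matrix.trace_diagonal]
  have h2 : (σ*σ).trace = ∑ i, d i ^ 2 := by
    have e : σ * σ = U * (Matrix.diagonal d * Matrix.diagonal d) * star U := by
      rw [hspec]
      rw [show (U * Matrix.diagonal d * star U) * (U * Matrix.diagonal d * star U)
          = U * (Matrix.diagonal d * ((star U * U) * Matrix.diagonal d)) * star U by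
        simp only [Matrix.mul_assoc]]
      rw [hUU, Matrix.one_mul]
    rw [e, Matrix.trace_mul_cycle, hUU, Matrix.one_mul,
      Matrix.diagonal_mul_diagonal, Matrix.trace_diagonal]
    exact Finset.sum_congr rfl fun i _ => (sq (d i)).symm
  have h3 : (σ*σ*σ).trace = ∑ i, d i ^ 3 := by
    have e : σ * σ * σ = U * (Matrix.diagonal d * Matrix.diagonal d * Matrix.diagonal d) * star U := by
      rw [hspec]
      rw [show (U * Matrix.diagonal d * star U) * (U * Matrix.diagonal d * star U) * (U * Matrix.diagonal d * star U)
          = U * (Matrix.diagonal d * ((star U * U) * (Matrix.diagonal d * ((star U * U) * Matrix.diagonal d)))) * star U by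
        simp only [Matrix.mul_assoc]]
      rw [hUU]
      simp only [Matrix.one_mul, Matrix.mul_assoc]
    rw [e, Matrix.trace_mul_cycle, hUU, Matrix.one_mul,
      Matrix.diagonal_mul_diagonal, Matrix.diagonal_mul_diagonal, Matrix.trace_diagonal]
    exact Finset.sum_congr rfl fun i _ => by ring
  rw [h2, h3]
  exact sum_cube_sq_le n hn d (by rw [← h1, htr])
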